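/- Let (Ω,Σ,μ) be a complete finite measure space and E an infinite-dimensional separable Banach space. If (Ω,Σ,μ) is not saturated, then there exists f ∈ L¹(μ,E) such that the set {∫_A f dμ : A ∈ Σ} is not convex; consequently, the decomposable set K = {χ_A f : A ∈ Σ} satisfies that {∫ g dμ : g ∈ K} is not convex. -/

import Mathlib

open MeasureTheory TopologicalSpace
open scoped Classical

noncomputable section

/-- A subset `K` of `L¹(μ,E)` is *decomposable* if for all `f, g ∈ K` and every measurable
set `A`, the function `χ_A f + (1 - χ_A) g` (equal to `f` on `A` and to `g` off `A`)
belongs to `K`. -/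
def Decomposable {Ω E : Type*} [MeasurableSpace Ω] [NormedAddCommGroup E]
    (μ : Measure Ω) (K : Set (Lp E 1 μ)) : Prop :=
  ∀ f ∈ K, ∀ g ∈ K, ∀ A : Set Ω, MeasurableSet A →
    ∀ h : Lp E 1 μ, (h : Ω → E) =ᵐ[μ] A.piecewise (f : Ω → E) (g : Ω → E) → h ∈ K

/-- A finite measure space is *saturated* if for every measurable set `S` of positive
measure, the space `L¹` of real-valued integrable functions with respect to the measure
restricted to `S` is not separable. -/
def Saturated {Ω : Type*} [MeasurableSpace Ω] (μ : Measure Ω) : Prop :=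
  ∀ S : Set Ω, MeasurableSet S → 0 < μ S →
    ¬ TopologicalSpace.SeparableSpace (Lp ℝ 1 (μ.restrict S))


open Filter
open scoped ENNReal Topology NNReal

section Biorth
variable {E : Type*} [NormedAddCommGroup E] [NormedSpace ℝ E]

variable {E : Type*} [NormedAddCommGroup E] [NormedSpace ℝ E]

lemma aux_vanish_functional (p : Submodule ℝ E) [FiniteDimensional ℝ p] {a : E} (ha : a ∉ p) :
    ∃ ψ : E →L[ℝ] ℝ, ψ a = 1 ∧ ∀ y ∈ p, ψ y = 0 := by
  obtain ⟨f, u, hfu, hua⟩ := geometric_hahn_banach_closed_point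
    p.convex p.closed_of_finiteDimensional ha
  have hp0 : ∀ y ∈ p, f y = 0 := by
    intro y hy
    by_contra hne
    have h1 : f ((( |u| + 1) / f y) • y) < u := hfu _ (p.smul_mem _ hy)
    rw [_root_.map_smul, smul_eq_mul, div_mul_cancel₀ _ hne] at h1
    have : u ≤ |u| := le_abs_self u
    linarith
  have hu0 : 0 < u := by
    have := hfu 0 p.zero_mem
    simpa using this
  have hfa : f a ≠ 0 := (hu0.trans hua).ne'
  refine ⟨(f a)⁻¹ • f, ?_, fun y hy => ?_⟩
  · simp [inv_mul_cancel₀ hfa]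
  · simp [hp0 y hy]

lemma aux_ker_not_le (hinf : ¬ FiniteDimensional ℝ E) (s : Finset (E × (E →L[ℝ] ℝ))) :
    ∃ a : E, (∀ q ∈ s, q.2 a = 0) ∧ a ∉ Submodule.span ℝ (↑(s.image Prod.fst) : Set E) := by
  by_contra hcon
  push_neg at hcon
  apply hinf
  set p : Submodule ℝ E := Submodule.span ℝ (↑(s.image Prod.fst) : Set E) with hp
  haveI : FiniteDimensional ℝ p := FiniteDimensional.span_finset ℝ _
  set L : E →ₗ[ℝ] (s → ℝ) := LinearMap.pi (fun q : s => (q.1.2 : E →ₗ[ℝ] ℝ)) with hL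
  have hker : LinearMap.ker L ≤ p := by
    intro a ha
    refine hcon a (fun q hq => ?_)
    have h0 := LinearMap.mem_ker.1 ha
    have := congrFun h0 ⟨q, hq⟩
    simpa [hL] using this
  haveI : FiniteDimensional ℝ (LinearMap.ker L) := Submodule.finiteDimensional_of_le hker
  have h1 : ((⊤ : Submodule ℝ E).map L).FG := by
    haveI : IsNoetherian ℝ (s → ℝ) := inferInstance
    exact IsNoetherian.noetherian _
  have h2 : ((⊤ : Submodule ℝ E) ⊓ LinearMap.ker L).FG := by
    rw [top_inf_eq]
    exact (Submodule.fg_iff_finiteDimensional _).2 inferInstance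
  have := Submodule.fg_of_fg_map_of_fg_inf_ker L h1 h2
  exact ⟨this⟩

lemma exists_biorthogonal (hinf : ¬ FiniteDimensional ℝ E) :
    ∃ (x : ℕ → E) (φ : ℕ → E →L[ℝ] ℝ), (∀ n, φ n (x n) = 1) ∧
      ∀ m n, m ≠ n → φ m (x n) = 0 := by
  have key : ∀ s : Finset (E × (E →L[ℝ] ℝ)), (∀ q ∈ s, q.2 q.1 = 1) →
      ∃ y : E × (E →L[ℝ] ℝ), y.2 y.1 = 1 ∧
        ∀ q ∈ s, (q.2 y.1 = 0 ∧ y.2 q.1 = 0) := by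
    intro s _
    obtain ⟨a, hker, hspan⟩ := aux_ker_not_le hinf s
    haveI : FiniteDimensional ℝ (Submodule.span ℝ (↑(s.image Prod.fst) : Set E)) :=
      FiniteDimensional.span_finset ℝ _
    obtain ⟨ψ, hψa, hψp⟩ := aux_vanish_functional _ hspan
    refine ⟨(a, ψ), hψa, fun q hq => ⟨hker q hq, ?_⟩⟩
    exact hψp _ (Submodule.subset_span (by simp; exact ⟨q.2, hq⟩))
  haveI : Std.Symm (α := E × (E →L[ℝ] ℝ)) (fun x y => (x.2 y.1 = 0 ∧ y.2 x.1 = 0) ∧ (y.2 x.1 = 0 ∧ x.2 y.1 = 0)) := ⟨fun x y h => ⟨h.2, h.1⟩⟩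
  obtain ⟨g, hP, hr⟩ := exists_seq_of_forall_finset_exists'
    (fun y : E × (E →L[ℝ] ℝ) => y.2 y.1 = 1)
    (fun x y => (x.2 y.1 = 0 ∧ y.2 x.1 = 0) ∧ (y.2 x.1 = 0 ∧ x.2 y.1 = 0))
    (fun s hs => by
      obtain ⟨y, hy1, hy2⟩ := key s hs
      exact ⟨y, hy1, fun q hq => ⟨hy2 q hq, ⟨(hy2 q hq).2, (hy2 q hq).1⟩⟩⟩)
  refine ⟨fun n => (g n).1, fun n => (g n).2, hP, fun m n hmn => ?_⟩
  exact (hr hmn).1.1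

end Biorth


lemma countable_generatePiSystem {α : Type*} {S : Set (Set α)} (hS : S.Countable) :
    (generatePiSystem S).Countable := by
  haveI := hS.to_subtype
  set F : List S → Set α := fun l => l.foldr (fun s t => ↑s ∩ t) Set.univ with hF
  have happ : ∀ l₁ l₂ : List S, F (l₁ ++ l₂) = F l₁ ∩ F l₂ := by
    intro l₁ l₂
    induction l₁ with
    | nil => simp [hF]
    | cons a l ih => simp [hF, List.foldr_cons] at ih ⊢; rw [ih, Set.inter_assoc]
  have hsub : generatePiSystem S ⊆ Set.range F := by
    intro t ht
    induction ht with
    | base h_s => exact ⟨[⟨_, h_s⟩], by simp [hF]⟩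
    | inter hs ht _ ihs iht =>
      obtain ⟨l₁, rfl⟩ := ihs
      obtain ⟨l₂, rfl⟩ := iht
      exact ⟨l₁ ++ l₂, happ l₁ l₂⟩
  exact (Set.countable_range F).mono hsub

lemma aux_exists_tendsto_meas {Ω : Type*} (m₀ : MeasurableSpace Ω) (w : ℕ → Ω → ℝ)
    (hw : ∀ i, Measurable[m₀] (w i)) :
    MeasurableSet[m₀] {ω | ∃ c, Filter.Tendsto (fun i => w i ω) Filter.atTop (nhds c)} := by
  letI := m₀
  exact measurableSet_exists_tendsto hw

lemma key_sep {Ω : Type*} [m : MeasurableSpace Ω] (μ : Measure Ω) [IsFiniteMeasure μ]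
    {S : Set Ω} (hS : MeasurableSet S)
    (hsep : SeparableSpace (Lp ℝ 1 (μ.restrict S))) :
    ∃ B : ℕ → Set Ω, (∀ n, MeasurableSet (B n)) ∧ B 0 = S ∧
      ∀ A : Set Ω, MeasurableSet A →
        (∀ n, μ (B n ∩ S ∩ A) = μ (B n ∩ S) / 2) → μ S = 0 := by
  set ν := μ.restrict S with hν
  haveI : Nonempty (Lp ℝ 1 ν) := ⟨0⟩
  obtain ⟨u, hu⟩ := TopologicalSpace.exists_dense_seq (Lp ℝ 1 ν)
  set h : ℕ → Ω → ℝ := fun k => (Lp.aestronglyMeasurable (u k)).mk _ with hh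
  have hmeas : ∀ k, Measurable (h k) := fun k =>
    ((Lp.aestronglyMeasurable (u k)).stronglyMeasurable_mk).measurable
  have hae : ∀ k, (u k : Ω → ℝ) =ᵐ[ν] h k := fun k => (Lp.aestronglyMeasurable (u k)).ae_eq_mk
  set C₀ : Set (Set Ω) := {S} ∪ ⋃ (k : ℕ) (q : ℚ), {h k ⁻¹' Set.Iio (q : ℝ)} with hC₀
  have hC₀c : C₀.Countable := (Set.countable_singleton S).union
    (Set.countable_iUnion fun k => Set.countable_iUnion fun q => Set.countable_singleton _)
  set C : Set (Set Ω) := generatePiSystem C₀ with hCdef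
  have hCc : C.Countable := countable_generatePiSystem hC₀c
  have hC₀meas : ∀ c ∈ C₀, MeasurableSet c := by
    rintro c hc
    rcases hc with rfl | hc
    · exact hS
    · simp only [Set.mem_iUnion, Set.mem_singleton_iff] at hc
      obtain ⟨k, q, rfl⟩ := hc
      exact (hmeas k) measurableSet_Iio
  have hCmeas : ∀ c ∈ C, MeasurableSet c := fun c hc =>
    generatePiSystem_measurableSet hC₀meas c hc
  set m₀ : MeasurableSpace Ω := MeasurableSpace.generateFrom C with hm₀def
  have hm₀ : m₀ ≤ m := MeasurableSpace.generateFrom_le hCmeas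
  have hCm₀ : ∀ c ∈ C, MeasurableSet[m₀] c := fun c hc =>
    MeasurableSpace.measurableSet_generateFrom hc
  have hm₀h : ∀ k, Measurable[m₀] (h k) := by
    intro k
    have key : @Measurable Ω ℝ m₀ (MeasurableSpace.generateFrom (⋃ a : ℚ, {Set.Iio (a : ℝ)}))
        (h k) := by
      refine measurable_generateFrom ?_
      rintro t ht
      simp only [Set.mem_iUnion, Set.mem_singleton_iff] at ht
      obtain ⟨q, rfl⟩ := ht
      refine hCm₀ _ (generatePiSystem.base ?_)
      exact Or.inr (by simp only [Set.mem_iUnion, Set.mem_singleton_iff]; exact ⟨k, q, rfl⟩)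
    have hbor : (inferInstance : MeasurableSpace ℝ)
        = MeasurableSpace.generateFrom (⋃ a : ℚ, {Set.Iio (a : ℝ)}) :=
      (BorelSpace.measurable_eq).trans Real.borel_eq_generateFrom_Iio_rat
    rw [← hbor] at key
    exact key
  have hSC : S ∈ C := generatePiSystem.base (Or.inl rfl)
  obtain ⟨e, he⟩ := Set.Countable.exists_eq_range hCc ⟨S, hSC⟩
  have heC : ∀ k, e k ∈ C := fun k => he ▸ Set.mem_range_self k
  refine ⟨fun n => Nat.rec S (fun k _ => e k) n, ?_, rfl, ?_⟩
  · intro n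
    cases n with
    | zero => exact hS
    | succ k => exact hCmeas _ (heC k)
  · intro A hA heq
    simp only at heq
    have heq0 : μ (S ∩ A) = μ S / 2 := by simpa using heq 0
    have heqe : ∀ k, μ (e k ∩ S ∩ A) = μ (e k ∩ S) / 2 := fun k => heq (k + 1)
    set ν₁ : @Measure Ω m₀ := (μ.restrict (S ∩ A)).trim hm₀ with hν₁
    set ν₂ : @Measure Ω m₀ := ((2⁻¹ : ℝ≥0∞) • μ.restrict S).trim hm₀ with hν₂
    haveI : IsFiniteMeasure ((2⁻¹ : ℝ≥0∞) • μ.restrict S) := by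
      constructor
      rw [Measure.smul_apply, smul_eq_mul]
      exact ENNReal.mul_lt_top (by simp) (measure_lt_top _ _)
    have hν12 : ν₁ = ν₂ := by
      refine @ext_of_generate_finite Ω m₀ ν₁ ν₂ C hm₀def
        (isPiSystem_generatePiSystem C₀) ?_ ?_ ?_
      · exact isFiniteMeasure_trim hm₀
      · intro c hc
        rw [hν₁, hν₂, trim_measurableSet_eq hm₀ (hCm₀ c hc),
          trim_measurableSet_eq hm₀ (hCm₀ c hc),
          Measure.restrict_apply (hCmeas c hc), Measure.smul_apply,
          Measure.restrict_apply (hCmeas c hc), smul_eq_mul]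
        obtain ⟨k, rfl⟩ : c ∈ Set.range e := he ▸ hc
        have h1 := heqe k
        rw [Set.inter_assoc] at h1
        rw [h1, ENNReal.div_eq_inv_mul]
      · rw [hν₁, hν₂, trim_measurableSet_eq hm₀ MeasurableSet.univ,
          trim_measurableSet_eq hm₀ MeasurableSet.univ]
        simp only [Measure.restrict_apply_univ, Measure.smul_apply, smul_eq_mul]
        rw [heq0, ENNReal.div_eq_inv_mul]
    -- build approximating m₀-measurable function for χ_{S ∩ A}
    set χf : Ω → ℝ := (S ∩ A).indicator (fun _ => (1 : ℝ)) with hχ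
    have hχmem : MemLp χf 1 ν :=
      memLp_indicator_const 1 (hS.inter hA) 1 (Or.inr (measure_lt_top ν _).ne)
    set χL : Lp ℝ 1 ν := hχmem.toLp χf with hχL
    have hex : ∀ j : ℕ, ∃ kk, dist χL (u kk) < 1 / (j + 1) := fun j =>
      hu.exists_dist_lt χL (by positivity)
    choose kk hkk using hex
    have htend : Tendsto (fun j => u (kk j)) atTop (𝓝 χL) := by
      rw [tendsto_iff_dist_tendsto_zero]
      refine squeeze_zero (fun j => dist_nonneg) (fun j => (le_of_lt ?_))
        tendsto_one_div_add_atTop_nhds_zero_nat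
      rw [dist_comm]
      exact hkk j
    have hmeas_tend : TendstoInMeasure ν (fun j => (u (kk j) : Ω → ℝ)) atTop χL :=
      tendstoInMeasure_of_tendsto_Lp htend
    obtain ⟨ns, _, hns⟩ := hmeas_tend.exists_seq_tendsto_ae
    set w : ℕ → Ω → ℝ := fun i => h (kk (ns i)) with hw
    have hwtend : ∀ᵐ ω ∂ν, Tendsto (fun i => w i ω) atTop (𝓝 (χf ω)) := by
      have h1 : ∀ᵐ ω ∂ν, ∀ i, (u (kk (ns i)) : Ω → ℝ) ω = w i ω :=
        ae_all_iff.2 fun i => hae _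
      have h2 : (χL : Ω → ℝ) =ᵐ[ν] χf := hχmem.coeFn_toLp
      filter_upwards [hns, h1, h2] with ω hω h1ω h2ω
      rw [← h2ω]
      exact hω.congr h1ω
    set T : Set Ω := {ω | ∃ c, Tendsto (fun i => w i ω) atTop (𝓝 c)} with hT
    have hTm : MeasurableSet[m₀] T :=
      aux_exists_tendsto_meas m₀ w (fun i => hm₀h (kk (ns i)))
    set w' : ℕ → Ω → ℝ := fun i => T.indicator (w i) with hw'
    set g : Ω → ℝ := fun ω => limUnder atTop (fun i => w' i ω) with hg
    have hgtend : ∀ ω, Tendsto (fun i => w' i ω) atTop (𝓝 (g ω)) := by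
      intro ω
      by_cases hω : ω ∈ T
      · have hmem : ω ∈ T := hω
        obtain ⟨c, hc⟩ := hω
        have hc' : Tendsto (fun i => w' i ω) atTop (𝓝 c) :=
          hc.congr (fun i => (Set.indicator_of_mem hmem _).symm)
        have : g ω = c := hc'.limUnder_eq
        rwa [this]
      · have hc' : Tendsto (fun i => w' i ω) atTop (𝓝 0) := by
          have : ∀ i, w' i ω = 0 := fun i => Set.indicator_of_notMem hω _
          simpa [funext this] using tendsto_const_nhds (α := ℝ) (f := atTop (α := ℕ))
        have : g ω = 0 := hc'.limUnder_eq
        rwa [this]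
    have hgmeas : Measurable[m₀] g := by
      have hsm : ∀ i, StronglyMeasurable[m₀] (w' i) := fun i =>
        (((hm₀h (kk (ns i))).indicator hTm)).stronglyMeasurable
      exact (stronglyMeasurable_of_tendsto atTop hsm (tendsto_pi_nhds.2 hgtend)).measurable
    have hgχ : ∀ᵐ ω ∂ν, g ω = χf ω := by
      filter_upwards [hwtend] with ω hω
      have hωT : ω ∈ T := ⟨_, hω⟩
      have h3 : Tendsto (fun i => w' i ω) atTop (𝓝 (χf ω)) :=
        hω.congr (fun i => (Set.indicator_of_mem hωT _).symm)
      exact h3.limUnder_eq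
    set G : Set Ω := g ⁻¹' Set.Ioi (2⁻¹ : ℝ) with hG
    have hGm₀ : MeasurableSet[m₀] G := hgmeas measurableSet_Ioi
    have hGm : MeasurableSet[m] G := hm₀ _ hGm₀
    have e1 : ν₁ G = μ (G ∩ (S ∩ A)) := by
      rw [hν₁, trim_measurableSet_eq hm₀ hGm₀, Measure.restrict_apply hGm]
    have e2 : ν₂ G = 2⁻¹ * μ (G ∩ S) := by
      rw [hν₂, trim_measurableSet_eq hm₀ hGm₀, Measure.smul_apply,
        Measure.restrict_apply hGm, smul_eq_mul]
    have hgae : ∀ᵐ ω ∂μ, ω ∈ S → g ω = χf ω := (ae_restrict_iff' hS).1 hgχ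
    have hc1 : (G ∩ (S ∩ A) : Set Ω) =ᵐ[μ] (S ∩ A : Set Ω) := by
      filter_upwards [hgae] with ω hω
      simp only [Set.mem_inter_iff, eq_iff_iff]
      constructor
      · rintro ⟨_, h2⟩; exact h2
      · intro h2
        refine ⟨?_, h2⟩
        have hgω : g ω = 1 := by
          rw [hω h2.1]; exact Set.indicator_of_mem h2 _
        simp only [hG, Set.mem_preimage, Set.mem_Ioi, hgω]
        norm_num
    have hc2 : (G ∩ S : Set Ω) =ᵐ[μ] (S ∩ A : Set Ω) := by
      filter_upwards [hgae] with ω hω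
      simp only [Set.mem_inter_iff, eq_iff_iff]
      constructor
      · rintro ⟨h1, h2⟩
        have hgω := hω h2
        by_contra hno
        have : χf ω = 0 := Set.indicator_of_notMem hno _
        rw [this] at hgω
        have : (2⁻¹ : ℝ) < 0 := by
          have := h1
          simpa [hG, hgω] using this
        norm_num at this
      · intro h2
        refine ⟨?_, h2.1⟩
        have hgω : g ω = 1 := by
          rw [hω h2.1]; exact Set.indicator_of_mem h2 _
        simp only [hG, Set.mem_preimage, Set.mem_Ioi, hgω]
        norm_num
    have hkey : μ (S ∩ A) = 2⁻¹ * μ (S ∩ A) := by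
      calc μ (S ∩ A) = μ (G ∩ (S ∩ A)) := (measure_congr hc1).symm
        _ = ν₁ G := e1.symm
        _ = ν₂ G := by rw [hν12]
        _ = 2⁻¹ * μ (G ∩ S) := e2
        _ = 2⁻¹ * μ (S ∩ A) := by rw [measure_congr hc2]
    have hfin : μ (S ∩ A) ≠ ⊤ := (measure_lt_top μ _).ne
    have h0 : μ (S ∩ A) = 0 := by
      by_contra hne
      have h2 : (2⁻¹ : ℝ≥0∞) * μ (S ∩ A) < 1 * μ (S ∩ A) := by
        refine ENNReal.mul_lt_mul_left hne hfin ?_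
        norm_num
      rw [one_mul] at h2
      nth_rewrite 2 [hkey] at h2
      exact lt_irrefl _ h2
    rw [h0] at heq0
    rcases ENNReal.div_eq_zero_iff.1 heq0.symm with h | h
    · exact h
    · simp at h

/-- If `(Ω,Σ,μ)` is not saturated and `E` is an infinite-dimensional separable Banach
space, then there exists `f ∈ L¹(μ,E)` whose indefinite-integral range is not convex;
consequently the decomposable set `K = {χ_A f : A ∈ Σ}` has a nonconvex set of
integrals. -/
theorem exists_nonconvex_range_of_not_saturated
    {Ω : Type*} [MeasurableSpace Ω] (μ : Measure Ω) [IsFiniteMeasure μ] [μ.IsComplete]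
    {E : Type*} [NormedAddCommGroup E] [NormedSpace ℝ E] [CompleteSpace E]
    [TopologicalSpace.SeparableSpace E]
    (hinf : ¬ FiniteDimensional ℝ E)
    (hnsat : ¬ Saturated μ) :
    ∃ f : Lp E 1 μ,
      ¬ Convex ℝ {x : E | ∃ A : Set Ω, MeasurableSet A ∧ ∫ ω in A, (f : Ω → E) ω ∂μ = x} ∧
      Decomposable μ
        {g : Lp E 1 μ | ∃ A : Set Ω, MeasurableSet A ∧
          (g : Ω → E) =ᵐ[μ] A.indicator (f : Ω → E)} ∧
      ¬ Convex ℝ {x : E |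
        ∃ g ∈ {g : Lp E 1 μ | ∃ A : Set Ω, MeasurableSet A ∧
          (g : Ω → E) =ᵐ[μ] A.indicator (f : Ω → E)},
        ∫ ω, (g : Ω → E) ω ∂μ = x} := by
  rw [Saturated] at hnsat
  push_neg at hnsat
  obtain ⟨S, hSmeas, hSpos, hsep⟩ := hnsat
  obtain ⟨B, hBmeas, hB0, hBkey⟩ := key_sep μ hSmeas hsep
  obtain ⟨x, φ, hbi1, hbi0⟩ := exists_biorthogonal hinf
  set c : ℕ → ℝ := fun n => (1/2 : ℝ)^n / (1 + ‖x n‖) with hc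
  have hcpos : ∀ n, 0 < c n := fun n => by
    have : (0:ℝ) < 1 + ‖x n‖ := by positivity
    positivity
  have hcbound : ∀ n, c n * ‖x n‖ ≤ (1/2 : ℝ)^n := by
    intro n
    rw [hc]
    rw [div_mul_eq_mul_div, div_le_iff₀ (by positivity)]
    have h1 : ‖x n‖ ≤ 1 + ‖x n‖ := by linarith [norm_nonneg (x n)]
    calc (1/2:ℝ)^n * ‖x n‖ ≤ (1/2:ℝ)^n * (1 + ‖x n‖) := by
          exact mul_le_mul_of_nonneg_left h1 (by positivity)
      _ = (1/2:ℝ)^n * (1 + ‖x n‖) := rfl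
  set u : ℕ → Ω → E := fun n => (B n ∩ S).indicator (fun _ => c n • x n) with hudef
  have humeas : ∀ n, StronglyMeasurable (u n) := fun n =>
    (stronglyMeasurable_const).indicator ((hBmeas n).inter hSmeas)
  have hubound : ∀ n ω, ‖u n ω‖ ≤ (1/2:ℝ)^n := by
    intro n ω
    refine le_trans (norm_indicator_le_norm_self _ _) ?_
    rw [norm_smul, Real.norm_eq_abs, abs_of_pos (hcpos n)]
    exact hcbound n
  have husum : ∀ ω, Summable (fun n => u n ω) := by
    intro ω
    refine Summable.of_norm_bounded summable_geometric_two ?_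
    intro n
    simpa using hubound n ω
  set f₀ : Ω → E := fun ω => ∑' n, u n ω with hf₀
  have hf₀meas : StronglyMeasurable f₀ := by
    refine stronglyMeasurable_of_tendsto atTop
      (f := fun N => fun ω => ∑ n ∈ Finset.range N, u n ω) ?_ ?_
    · intro N
      exact Finset.stronglyMeasurable_fun_sum _ (fun n _ => humeas n)
    · rw [tendsto_pi_nhds]
      intro ω
      exact ((husum ω).hasSum).tendsto_sum_nat
  have hf₀bound : ∀ ω, ‖f₀ ω‖ ≤ 2 := by
    intro ω
    refine le_trans (norm_tsum_le_tsum_norm ?_) ?_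
    · exact Summable.of_nonneg_of_le (fun n => norm_nonneg _) (fun n => hubound n ω)
        summable_geometric_two
    · calc ∑' n, ‖u n ω‖ ≤ ∑' n, (1/2:ℝ)^n := by
            refine Summable.tsum_le_tsum (fun n => hubound n ω) ?_ summable_geometric_two
            exact Summable.of_nonneg_of_le (fun n => norm_nonneg _) (fun n => hubound n ω)
              summable_geometric_two
        _ = 2 := tsum_geometric_two
  have hf₀int : Integrable f₀ μ := by
    refine Integrable.mono' (integrable_const 2) hf₀meas.aestronglyMeasurable ?_
    exact Filter.Eventually.of_forall hf₀bound
  set fLp : Lp E 1 μ := hf₀int.toL1 f₀ with hfLp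
  have hcoe : (fLp : Ω → E) =ᵐ[μ] f₀ := hf₀int.coeFn_toL1
  -- the integral computation
  have hInt : ∀ A : Set Ω, MeasurableSet A → ∀ mm : ℕ,
      φ mm (∫ ω in A, (fLp : Ω → E) ω ∂μ) = (μ (B mm ∩ S ∩ A)).toReal * c mm := by
    intro A hA mm
    have h1 : ∫ ω in A, (fLp : Ω → E) ω ∂μ = ∫ ω in A, f₀ ω ∂μ :=
      integral_congr_ae (ae_restrict_of_ae hcoe)
    have h2 : ∫ ω in A, f₀ ω ∂μ = ∑' n, ∫ ω in A, u n ω ∂μ := by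
      rw [hf₀]
      refine integral_tsum (fun n => (humeas n).aestronglyMeasurable) ?_
      have hb : ∀ n, ∫⁻ ω, ‖u n ω‖₊ ∂(μ.restrict A) ≤ ((2:ℝ≥0∞)⁻¹)^n * μ Set.univ := by
        intro n
        calc ∫⁻ ω, ‖u n ω‖₊ ∂(μ.restrict A)
            ≤ ∫⁻ _, ((2:ℝ≥0∞)⁻¹)^n ∂(μ.restrict A) := by
              refine lintegral_mono (fun ω => ?_)
              rw [← enorm_eq_nnnorm, ← ofReal_norm]
              calc ENNReal.ofReal ‖u n ω‖ ≤ ENNReal.ofReal ((1/2:ℝ)^n) :=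
                    ENNReal.ofReal_le_ofReal (hubound n ω)
                _ = ((2:ℝ≥0∞)⁻¹)^n := by
                    rw [ENNReal.ofReal_pow (by norm_num : (0:ℝ) ≤ 1/2)]
                    congr 1
                    rw [show (1/2:ℝ) = ((2:ℝ))⁻¹ by norm_num,
                      ENNReal.ofReal_inv_of_pos (by norm_num)]
                    norm_num
            _ = ((2:ℝ≥0∞)⁻¹)^n * (μ.restrict A) Set.univ := by rw [lintegral_const]
            _ ≤ ((2:ℝ≥0∞)⁻¹)^n * μ Set.univ := by
              refine mul_le_mul_right ?_ _
              exact Measure.restrict_le_self _ -- may not typecheck; fix below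
      refine ne_of_lt (lt_of_le_of_lt (ENNReal.tsum_le_tsum hb) ?_)
      rw [ENNReal.tsum_mul_right]
      refine ENNReal.mul_lt_top ?_ (measure_lt_top _ _)
      rw [ENNReal.tsum_geometric]
      simp [ENNReal.one_sub_inv_two]
    have h3 : ∀ n, ∫ ω in A, u n ω ∂μ = (μ (B n ∩ S ∩ A)).toReal • (c n • x n) := by
      intro n
      rw [hudef]
      rw [integral_indicator_const ((c n • x n)) ((hBmeas n).inter hSmeas)]
      rw [Measure.real, Measure.restrict_apply ((hBmeas n).inter hSmeas)]
    have hIsum : Summable (fun n => (μ (B n ∩ S ∩ A)).toReal • (c n • x n)) := by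
      refine Summable.of_norm_bounded (g := fun n => (μ Set.univ).toReal * (1/2:ℝ)^n)
        (Summable.mul_left _ summable_geometric_two) ?_
      intro n
      rw [norm_smul, Real.norm_eq_abs, abs_of_nonneg ENNReal.toReal_nonneg]
      have h4 : ‖c n • x n‖ ≤ (1/2:ℝ)^n := by
        rw [norm_smul, Real.norm_eq_abs, abs_of_pos (hcpos n)]; exact hcbound n
      have h5 : (μ (B n ∩ S ∩ A)).toReal ≤ (μ Set.univ).toReal := by
        refine ENNReal.toReal_mono (measure_ne_top _ _) (measure_mono (Set.subset_univ _))
      exact mul_le_mul h5 h4 (norm_nonneg _) ENNReal.toReal_nonneg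
    rw [h1, h2]
    rw [show (fun n => ∫ ω in A, u n ω ∂μ) = fun n => (μ (B n ∩ S ∩ A)).toReal • (c n • x n)
      from funext h3]
    rw [(φ mm).map_tsum hIsum]
    rw [tsum_eq_single mm (fun n hn => ?_)]
    · rw [_root_.map_smul, _root_.map_smul, hbi1 mm]
      simp [smul_eq_mul]
    · rw [_root_.map_smul, _root_.map_smul, hbi0 mm n (Ne.symm hn)]
      simp
  -- the range set is not convex
  have hRnc : ¬ Convex ℝ {xx : E | ∃ A : Set Ω, MeasurableSet A ∧
      ∫ ω in A, (fLp : Ω → E) ω ∂μ = xx} := by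
    intro hconv
    set v : E := ∫ ω in Set.univ, (fLp : Ω → E) ω ∂μ with hv
    have h0mem : (0 : E) ∈ {xx : E | ∃ A : Set Ω, MeasurableSet A ∧
        ∫ ω in A, (fLp : Ω → E) ω ∂μ = xx} := by
      refine ⟨∅, MeasurableSet.empty, ?_⟩
      rw [Measure.restrict_empty, integral_zero_measure]
    have hvmem : v ∈ {xx : E | ∃ A : Set Ω, MeasurableSet A ∧
        ∫ ω in A, (fLp : Ω → E) ω ∂μ = xx} := ⟨Set.univ, MeasurableSet.univ, rfl⟩
    have hmid := hconv h0mem hvmem (by norm_num : (0:ℝ) ≤ 1/2)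
      (by norm_num : (0:ℝ) ≤ 1/2) (by norm_num)
    rw [smul_zero, zero_add] at hmid
    obtain ⟨A, hA, hAeq⟩ := hmid
    have heqm : ∀ n, μ (B n ∩ S ∩ A) = μ (B n ∩ S) / 2 := by
      intro n
      have h6 := hInt A hA n
      rw [hAeq] at h6
      rw [_root_.map_smul, smul_eq_mul, hInt Set.univ MeasurableSet.univ n] at h6
      rw [Set.inter_univ] at h6
      have h7 : (μ (B n ∩ S ∩ A)).toReal = 1/2 * (μ (B n ∩ S)).toReal := by
        have hcne : c n ≠ 0 := (hcpos n).ne'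
        have h6' : (μ (B n ∩ S ∩ A)).toReal * c n = (1/2 * (μ (B n ∩ S)).toReal) * c n := by
          rw [← h6]; ring
        exact mul_right_cancel₀ hcne h6'
      have h8 : (μ (B n ∩ S) / 2).toReal = 1/2 * (μ (B n ∩ S)).toReal := by
        rw [ENNReal.toReal_div]
        norm_num
        ring
      refine (ENNReal.toReal_eq_toReal_iff' (measure_ne_top _ _) ?_).1 (h7.trans h8.symm)
      exact (ENNReal.div_lt_top (measure_ne_top _ _) (by norm_num)).ne
    exact absurd (hBkey A hA heqm) hSpos.ne'
  refine ⟨fLp, hRnc, ?_, ?_⟩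
  · -- decomposability
    rintro g₁ ⟨A₁, hA₁, he₁⟩ g₂ ⟨A₂, hA₂, he₂⟩ A hA hfn hhh
    refine ⟨(A ∩ A₁) ∪ (Aᶜ ∩ A₂), (hA.inter hA₁).union (hA.compl.inter hA₂), ?_⟩
    filter_upwards [hhh, he₁, he₂] with ω h0 h1 h2
    rw [h0]
    by_cases hωA : ω ∈ A
    · rw [Set.piecewise_eq_of_mem _ _ _ hωA, h1]
      by_cases h1m : ω ∈ A₁
      · rw [Set.indicator_of_mem h1m, Set.indicator_of_mem (show ω ∈ (A ∩ A₁) ∪ (Aᶜ ∩ A₂) from Or.inl ⟨hωA, h1m⟩)]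
      · rw [Set.indicator_of_notMem h1m, Set.indicator_of_notMem ?_]
        rintro (⟨-, hmm⟩ | ⟨hcc, -⟩)
        · exact h1m hmm
        · exact hcc hωA
    · rw [Set.piecewise_eq_of_notMem _ _ _ hωA, h2]
      by_cases h2m : ω ∈ A₂
      · rw [Set.indicator_of_mem h2m, Set.indicator_of_mem (show ω ∈ (A ∩ A₁) ∪ (Aᶜ ∩ A₂) from Or.inr ⟨hωA, h2m⟩)]
      · rw [Set.indicator_of_notMem h2m, Set.indicator_of_notMem ?_]
        rintro (⟨hcc, -⟩ | ⟨-, hmm⟩)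
        · exact hωA hcc
        · exact h2m hmm
  · -- third set equals first set
    have hTR : {xx : E | ∃ g ∈ {g : Lp E 1 μ | ∃ A : Set Ω, MeasurableSet A ∧
          (g : Ω → E) =ᵐ[μ] A.indicator (fLp : Ω → E)},
        ∫ ω, (g : Ω → E) ω ∂μ = xx}
        = {xx : E | ∃ A : Set Ω, MeasurableSet A ∧
          ∫ ω in A, (fLp : Ω → E) ω ∂μ = xx} := by
      ext xx
      constructor
      · rintro ⟨g, ⟨A, hA, hg⟩, rfl⟩
        refine ⟨A, hA, ?_⟩
        rw [← integral_indicator hA]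
        exact (integral_congr_ae hg).symm
      · rintro ⟨A, hA, rfl⟩
        have hind : Integrable (A.indicator f₀) μ := hf₀int.indicator hA
        refine ⟨hind.toL1 _, ⟨A, hA, ?_⟩, ?_⟩
        · refine (hind.coeFn_toL1).trans ?_
          filter_upwards [hcoe] with ω hω
          by_cases hm : ω ∈ A
          · rw [Set.indicator_of_mem hm, Set.indicator_of_mem hm, hω]
          · rw [Set.indicator_of_notMem hm, Set.indicator_of_notMem hm]
        · rw [integral_congr_ae (hind.coeFn_toL1), integral_indicator hA]
          exact integral_congr_ae (ae_restrict_of_ae hcoe.symm)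
    rw [hTR]
    exact hRnc
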